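/- (Almost-rigidity, Theorem 1.) Assume the framework setup and suppose D < 1/2. Then every continuous path q : [0,1] → ℝ^{dn} with q(0) = p, q(t) ∈ 𝒞^p for all t, and which preserves all edge lengths of p (i.e. |q(t)_i − q(t)_j| = |p_i − p_j| for every edge (i,j) ∈ E and every t ∈ [0,1]) satisfies |q(t) − p| ≤ η₁ for all t ∈ [0,1]. -/

import Mathlib

noncomputable section
open scoped BigOperators InnerProductSpace Classical

/-- Configuration space of `n` points in `ℝ^d`, with the Euclidean norm on `ℝ^{dn}`. -/
abbrev Config (n d : ℕ) := PiLp 2 (fun _ : Fin n => EuclideanSpace ℝ (Fin d))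

/-- The rigidity operator `R(q)` applied to `u`: the `k`-th entry, for edge `k = (i,j)`,
is `⟨q_i - q_j, u_i - u_j⟩`. -/
def rig {n d m : ℕ} (E : Fin m → Fin n × Fin n) (q u : Config n d) :
    EuclideanSpace ℝ (Fin m) :=
  WithLp.toLp 2 (fun k => ⟪q (E k).1 - q (E k).2, u (E k).1 - u (E k).2⟫_ℝ)

/-- The stress form `Ω_ω(v) = Σ_{(i,j)∈E} ω_{ij} |v_i - v_j|²`. -/
def stressForm {n d m : ℕ} (E : Fin m → Fin n × Fin n)
    (ω : EuclideanSpace ℝ (Fin m)) (v : Config n d) : ℝ :=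
  ∑ k, ω k * ‖v (E k).1 - v (E k).2‖ ^ 2

/-- The vector `ωᵀ R(p) ∈ ℝ^{dn}` whose `l`-th block is `Σ_{j : (l,j)∈E} ω_{lj} (p_l - p_j)`. -/
def stressGrad {n d m : ℕ} (E : Fin m → Fin n × Fin n)
    (ω : EuclideanSpace ℝ (Fin m)) (p : Config n d) : Config n d :=
  WithLp.toLp 2 (fun l => ∑ k, (((if (E k).1 = l then (1:ℝ) else 0) - (if (E k).2 = l then (1:ℝ) else 0)) * ω k) •
    (p (E k).1 - p (E k).2))

/-- The vector `e(q) ∈ ℝ^m` of squared edge lengths. -/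
def esq {n d m : ℕ} (E : Fin m → Fin n × Fin n) (q : Config n d) :
    EuclideanSpace ℝ (Fin m) :=
  WithLp.toLp 2 (fun k => ‖q (E k).1 - q (E k).2‖ ^ 2)

/-- `z` bounds the number of edges incident to each vertex (`z ≥` the maximum adjacency). -/
def degBound {n m : ℕ} (E : Fin m → Fin n × Fin n) (z : ℝ) : Prop :=
  ∀ l : Fin n, ((Finset.univ.filter (fun k => (E k).1 = l ∨ (E k).2 = l)).card : ℝ) ≤ z

lemma stressGrad_inner {n d m : ℕ} (E : Fin m → Fin n × Fin n)
    (ω : EuclideanSpace ℝ (Fin m)) (p v : Config n d) :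
    ⟪stressGrad E ω p, v⟫_ℝ = ∑ k, ω k * rig E p v k := by
  rw [PiLp.inner_apply]
  simp only [stressGrad, PiLp.toLp_apply, sum_inner, real_inner_smul_left]
  rw [Finset.sum_comm]
  refine Finset.sum_congr rfl (fun k _ => ?_)
  have key : ∀ l : Fin n,
      (((if (E k).1 = l then (1:ℝ) else 0) - (if (E k).2 = l then (1:ℝ) else 0)) * ω k) *
        ⟪p (E k).1 - p (E k).2, v l⟫_ℝ
      = (if (E k).1 = l then ω k * ⟪p (E k).1 - p (E k).2, v l⟫_ℝ else 0)
        - (if (E k).2 = l then ω k * ⟪p (E k).1 - p (E k).2, v l⟫_ℝ else 0) := by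
    intro l
    split_ifs <;> ring
  rw [Finset.sum_congr rfl (fun l _ => key l), Finset.sum_sub_distrib,
    Finset.sum_ite_eq, Finset.sum_ite_eq]
  simp only [Finset.mem_univ, if_true, rig, inner_sub_right]
  ring

lemma rig_smul {n d m : ℕ} (E : Fin m → Fin n × Fin n) (p v : Config n d) (c : ℝ) (k : Fin m) :
    rig E p (c • v) k = c * rig E p v k := by
  simp only [rig, PiLp.toLp_apply, PiLp.smul_apply, ← smul_sub, real_inner_smul_right]

lemma stressForm_smul {n d m : ℕ} (E : Fin m → Fin n × Fin n)
    (ω : EuclideanSpace ℝ (Fin m)) (v : Config n d) (c : ℝ) :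
    stressForm E ω (c • v) = c ^ 2 * stressForm E ω v := by
  simp only [stressForm, PiLp.smul_apply, ← smul_sub, norm_smul, Real.norm_eq_abs,
    mul_pow, sq_abs, Finset.mul_sum]
  exact Finset.sum_congr rfl (fun k _ => by ring)

lemma config_norm_sq {n d : ℕ} (v : Config n d) : ‖v‖ ^ 2 = ∑ l, ‖v l‖ ^ 2 :=
  PiLp.norm_sq_eq_of_L2 _ v

lemma eucl_norm_sq {m : ℕ} (r : EuclideanSpace ℝ (Fin m)) : ‖r‖ ^ 2 = ∑ k, (r k) ^ 2 := by
  rw [PiLp.norm_sq_eq_of_L2]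
  simp [sq_abs]

lemma sub_sq_le {X : Type*} [SeminormedAddCommGroup X] (a b : X) :
    ‖a - b‖ ^ 2 ≤ 2 * (‖a‖ ^ 2 + ‖b‖ ^ 2) := by
  have h := norm_sub_le a b
  have h2 : ‖a - b‖ ^ 2 ≤ (‖a‖ + ‖b‖) ^ 2 := by
    have := pow_le_pow_left₀ (norm_nonneg (a - b)) h 2
    simpa using this
  nlinarith [sq_nonneg (‖a‖ - ‖b‖)]

lemma pair_bound {n d : ℕ} (v : Config n d) (i j : Fin n) (hij : i ≠ j) :
    ‖v i - v j‖ ^ 2 ≤ 2 * ‖v‖ ^ 2 := by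
  have h1 : ‖v i‖ ^ 2 + ‖v j‖ ^ 2 ≤ ‖v‖ ^ 2 := by
    rw [config_norm_sq]
    have := Finset.sum_le_sum_of_subset_of_nonneg (f := fun l => ‖v l‖ ^ 2)
      (s := {i, j}) (t := Finset.univ) (Finset.subset_univ _)
      (fun l _ _ => by positivity)
    rwa [Finset.sum_pair hij] at this
  linarith [sub_sq_le (v i) (v j)]

lemma sum_edge_bound {n d m : ℕ} (E : Fin m → Fin n × Fin n) (hE : ∀ k, (E k).1 ≠ (E k).2)
    (z : ℝ) (hdeg : degBound E z) (v : Config n d) :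
    ∑ k, ‖v (E k).1 - v (E k).2‖ ^ 2 ≤ 2 * z * ‖v‖ ^ 2 := by
  calc ∑ k, ‖v (E k).1 - v (E k).2‖ ^ 2
      ≤ ∑ k, 2 * (‖v (E k).1‖ ^ 2 + ‖v (E k).2‖ ^ 2) :=
        Finset.sum_le_sum (fun k _ => sub_sq_le _ _)
    _ = 2 * ∑ k : Fin m, ∑ l : Fin n,
          (if (E k).1 = l ∨ (E k).2 = l then ‖v l‖ ^ 2 else 0) := by
        rw [Finset.mul_sum]
        refine Finset.sum_congr rfl (fun k _ => ?_)
        congr 1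
        have key : ∀ l : Fin n, (if (E k).1 = l ∨ (E k).2 = l then ‖v l‖ ^ 2 else 0)
            = (if (E k).1 = l then ‖v l‖ ^ 2 else 0) + (if (E k).2 = l then ‖v l‖ ^ 2 else 0) := by
          intro l
          by_cases h1 : (E k).1 = l <;> by_cases h2 : (E k).2 = l <;> simp_all
          exact absurd (h1.trans h2.symm) (hE k)
        rw [Finset.sum_congr rfl (fun l _ => key l), Finset.sum_add_distrib,
          Finset.sum_ite_eq, Finset.sum_ite_eq]
        simp
    _ = 2 * ∑ l : Fin n,
          ((Finset.univ.filter (fun k => (E k).1 = l ∨ (E k).2 = l)).card : ℝ) * ‖v l‖ ^ 2 := by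
        rw [Finset.sum_comm]
        congr 1
        refine Finset.sum_congr rfl (fun l _ => ?_)
        rw [← Finset.sum_filter, Finset.sum_const, nsmul_eq_mul]
    _ ≤ 2 * ∑ l : Fin n, z * ‖v l‖ ^ 2 := by
        have : ∀ l : Fin n,
            ((Finset.univ.filter (fun k => (E k).1 = l ∨ (E k).2 = l)).card : ℝ) * ‖v l‖ ^ 2
            ≤ z * ‖v l‖ ^ 2 := fun l =>
          mul_le_mul_of_nonneg_right (hdeg l) (by positivity)
        linarith [Finset.sum_le_sum (fun l (_ : l ∈ Finset.univ) => this l)]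
    _ = 2 * z * ‖v‖ ^ 2 := by rw [config_norm_sq, ← Finset.mul_sum]; ring

set_option maxHeartbeats 4000000 in
theorem almost_rigidity {n d m : ℕ} (E : Fin m → Fin n × Fin n) (hm : 0 < m)
    (hE : ∀ k, (E k).1 ≠ (E k).2)
    (p : Config n d) (C : Submodule ℝ (Config n d))
    (z κ lam μ₀ : ℝ) (ω : EuclideanSpace ℝ (Fin m))
    (hz : 1 ≤ z) (hdeg : degBound E z)
    (hκ : 0 < κ) (hlam : 0 < lam) (hμ₀ : μ₀ ≤ lam / 2)
    (hlower : ∀ v ∈ C, ‖v‖ = 1 → lam ≤ 2 * κ * ‖rig E p v‖ ^ 2 + stressForm E ω v)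
    (hμlower : ∀ v ∈ C, ‖v‖ = 1 → μ₀ ≤ stressForm E ω v)
    (L μbar η₁ D : ℝ)
    (hL : L = Real.sqrt (lam / (8 * z * κ)))
    (hμbar : μbar = 1 - μ₀ / lam)
    (hη₁ : η₁ = 4 * ‖stressGrad E ω p‖ / lam)
    (hD : D = (η₁ / L) * (Real.sqrt μbar + η₁ / L))
    (hDlt : D < 1 / 2)
    (q : ℝ → Config n d)
    (hcont : ContinuousOn q (Set.Icc 0 1))
    (hq0 : q 0 = p)
    (hqC : ∀ t ∈ Set.Icc (0:ℝ) 1, q t - p ∈ C)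
    (hlen : ∀ t ∈ Set.Icc (0:ℝ) 1, ∀ k,
      ‖q t (E k).1 - q t (E k).2‖ = ‖p (E k).1 - p (E k).2‖) :
    ∀ t ∈ Set.Icc (0:ℝ) 1, ‖q t - p‖ ≤ η₁ := by
  set G : ℝ := ‖stressGrad E ω p‖ with hG
  have hzpos : (0:ℝ) < z := lt_of_lt_of_le one_pos hz
  have hLpos : 0 < L := by
    rw [hL]
    exact Real.sqrt_pos.mpr (by positivity)
  have hL2 : L ^ 2 = lam / (8 * z * κ) := by
    rw [hL, Real.sq_sqrt (by positivity)]
  have hGnn : 0 ≤ G := norm_nonneg _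
  have hη₁nn : 0 ≤ η₁ := by rw [hη₁]; positivity
  have hGeq : G = lam * η₁ / 4 := by
    rw [hη₁]; field_simp
  -- η₁ < L
  have hηL : η₁ < L := by
    have hratnn : 0 ≤ η₁ / L := div_nonneg hη₁nn hLpos.le
    have hD2 : (η₁ / L) ^ 2 ≤ D := by
      rw [hD]
      nlinarith [Real.sqrt_nonneg μbar]
    have hlt1 : η₁ / L < 1 := by nlinarith
    exact (div_lt_one hLpos).mp hlt1
  -- key quantitative step
  have main : ∀ t ∈ Set.Icc (0:ℝ) 1, ‖q t - p‖ ≤ L → ‖q t - p‖ ≤ 2/3 * η₁ := by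
    intro t ht hxL
    set v : Config n d := q t - p with hv
    -- per-edge identity
    have hb : ∀ k, rig E p v k = -(1/2) * ‖v (E k).1 - v (E k).2‖ ^ 2 := by
      intro k
      have hsum : q t (E k).1 - q t (E k).2
          = (p (E k).1 - p (E k).2) + (v (E k).1 - v (E k).2) := by
        simp only [hv, PiLp.sub_apply]; abel
      have hnorm := norm_add_sq_real (p (E k).1 - p (E k).2) (v (E k).1 - v (E k).2)
      rw [← hsum, hlen t ht k] at hnorm
      simp only [rig, PiLp.toLp_apply]
      show ⟪p (E k).1 - p (E k).2, v (E k).1 - v (E k).2⟫_ℝ = _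
      linarith
    -- stress form identity and Cauchy-Schwarz
    have hΩ : stressForm E ω v = -2 * ⟪stressGrad E ω p, v⟫_ℝ := by
      rw [stressGrad_inner, stressForm, Finset.mul_sum]
      refine Finset.sum_congr rfl (fun k _ => ?_)
      rw [hb k]; ring
    have hCS : stressForm E ω v ≤ 2 * G * ‖v‖ := by
      rw [hΩ]
      have h := real_inner_le_norm (stressGrad E ω p) (-v)
      rw [inner_neg_right, norm_neg] at h
      linarith
    -- rigidity operator bound
    have hrig : ‖rig E p v‖ ^ 2 ≤ z * ‖v‖ ^ 4 := by
      rw [eucl_norm_sq]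
      have h1 : ∀ k, (rig E p v k) ^ 2
          ≤ 1/2 * ‖v‖ ^ 2 * ‖v (E k).1 - v (E k).2‖ ^ 2 := by
        intro k
        rw [hb k]
        have h2 := pair_bound v (E k).1 (E k).2 (hE k)
        have h3 : (0:ℝ) ≤ ‖v (E k).1 - v (E k).2‖ ^ 2 := by positivity
        nlinarith
      calc ∑ k, (rig E p v k) ^ 2
          ≤ ∑ k, 1/2 * ‖v‖ ^ 2 * ‖v (E k).1 - v (E k).2‖ ^ 2 :=
            Finset.sum_le_sum (fun k _ => h1 k)
        _ = 1/2 * ‖v‖ ^ 2 * ∑ k, ‖v (E k).1 - v (E k).2‖ ^ 2 := by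
            rw [Finset.mul_sum]
        _ ≤ 1/2 * ‖v‖ ^ 2 * (2 * z * ‖v‖ ^ 2) :=
            mul_le_mul_of_nonneg_left (sum_edge_bound E hE z hdeg v) (by positivity)
        _ = z * ‖v‖ ^ 4 := by ring
    -- main inequality at scale ‖v‖
    have hQ : lam * ‖v‖ ^ 2 ≤ 2 * κ * ‖rig E p v‖ ^ 2 + stressForm E ω v := by
      rcases eq_or_ne v 0 with h0 | h0
      · have hS0 : stressForm E ω (0 : Config n d) = 0 := by
          simp [stressForm]
        rw [h0, hS0, norm_zero]
        have : (0:ℝ) ≤ 2 * κ * ‖rig E p (0 : Config n d)‖ ^ 2 := by positivity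
        nlinarith
      · have hvpos : 0 < ‖v‖ := norm_pos_iff.mpr h0
        set c : ℝ := ‖v‖⁻¹ with hc
        have hcpos : 0 < c := inv_pos.mpr hvpos
        have hu1 : ‖c • v‖ = 1 := by
          rw [norm_smul, Real.norm_eq_abs, abs_of_pos hcpos, hc]
          field_simp
        have huC : c • v ∈ C := C.smul_mem c (hqC t ht)
        have hlow := hlower _ huC hu1
        have hr : ‖rig E p (c • v)‖ ^ 2 = c ^ 2 * ‖rig E p v‖ ^ 2 := by
          have heq : rig E p (c • v) = c • rig E p v :=
            by
              apply WithLp.ofLp_injective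
              exact funext (fun k => by rw [rig_smul, PiLp.smul_apply, smul_eq_mul])
          rw [heq, norm_smul, Real.norm_eq_abs, mul_pow, sq_abs]
        rw [hr, stressForm_smul] at hlow
        have hc2 : c ^ 2 * ‖v‖ ^ 2 = 1 := by
          rw [hc]; field_simp
        have hmul := mul_le_mul_of_nonneg_right hlow (sq_nonneg ‖v‖)
        calc lam * ‖v‖ ^ 2
            ≤ (2 * κ * (c ^ 2 * ‖rig E p v‖ ^ 2) + c ^ 2 * stressForm E ω v) * ‖v‖ ^ 2 := hmul
          _ = 2 * κ * ‖rig E p v‖ ^ 2 * (c ^ 2 * ‖v‖ ^ 2)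
              + stressForm E ω v * (c ^ 2 * ‖v‖ ^ 2) := by ring
          _ = 2 * κ * ‖rig E p v‖ ^ 2 + stressForm E ω v := by rw [hc2]; ring
    -- combine
    have h5 : 2 * κ * ‖rig E p v‖ ^ 2 ≤ 2 * κ * (z * ‖v‖ ^ 4) := by
      have := mul_le_mul_of_nonneg_left hrig (le_of_lt (by positivity : (0:ℝ) < 2 * κ))
      linarith [this]
    have hfinal : lam * ‖v‖ ^ 2 ≤ 2 * κ * z * ‖v‖ ^ 4 + 2 * G * ‖v‖ := by
      have he : 2 * κ * (z * ‖v‖ ^ 4) = 2 * κ * z * ‖v‖ ^ 4 := by ring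
      linarith [hQ, h5, hCS]
    have hxnn : 0 ≤ ‖v‖ := norm_nonneg v
    clear hb hΩ hCS hrig hQ h5
    -- pure real arithmetic from here
    show ‖v‖ ≤ 2/3 * η₁
    generalize hx : ‖v‖ = x at hxL hfinal hxnn ⊢
    have h2κzL : 2 * κ * z * L ^ 2 = lam / 4 := by
      rw [hL2]; field_simp; ring
    have hx2 : x ^ 2 ≤ L ^ 2 := by nlinarith
    have hb4 : 2 * κ * z * x ^ 4 ≤ lam / 4 * x ^ 2 := by
      nlinarith [mul_nonneg (mul_nonneg (by linarith : (0:ℝ) ≤ 2 * κ) hzpos.le)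
        (mul_nonneg (sub_nonneg.mpr hx2) (sq_nonneg x))]
    have h34 : 3 * lam * x ^ 2 ≤ 2 * lam * η₁ * x := by
      rw [hGeq] at hfinal
      nlinarith
    rcases eq_or_lt_of_le hxnn with h0 | hxpos
    · rw [← h0]; positivity
    · nlinarith [mul_pos hlam hxpos]
  -- continuity argument
  have h23 : 2/3 * η₁ < L := by nlinarith
  intro t ht
  have hmono : 2/3 * η₁ ≤ η₁ := by nlinarith
  suffices h : ‖q t - p‖ ≤ 2/3 * η₁ by linarith
  by_contra hcon
  push_neg at hcon
  have hgtL : L < ‖q t - p‖ := by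
    by_contra hle
    push_neg at hle
    exact absurd (main t ht hle) (not_le.mpr hcon)
  set f : ℝ → ℝ := fun s => ‖q s - p‖ with hf
  have hfc : ContinuousOn f (Set.Icc 0 t) := by
    apply ContinuousOn.norm
    exact ((hcont.mono (Set.Icc_subset_Icc le_rfl ht.2)).sub continuousOn_const)
  set cmid : ℝ := (2/3 * η₁ + L) / 2 with hcm
  have hc1 : 2/3 * η₁ < cmid := by rw [hcm]; linarith
  have hc2 : cmid < L := by rw [hcm]; linarith
  have hmem : cmid ∈ Set.Icc (f 0) (f t) := by
    constructor
    · have hf0 : f 0 = 0 := by simp [hf, hq0]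
      rw [hf0]
      nlinarith
    · show cmid ≤ ‖q t - p‖
      linarith
  obtain ⟨s, hs, hfs⟩ := intermediate_value_Icc ht.1 hfc hmem
  have hs01 : s ∈ Set.Icc (0:ℝ) 1 := ⟨hs.1, le_trans hs.2 ht.2⟩
  have hkey := main s hs01 (by rw [show ‖q s - p‖ = f s from rfl, hfs]; linarith)
  rw [show ‖q s - p‖ = f s from rfl, hfs] at hkey
  linarith
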